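/- Let r ≥ 1, let δ be an integer, and set ρ̂ = (−δ/2, −δ/2 − 1, …, −δ/2 − (r−1)) ∈ ℚ^r. Let λ and μ be partitions with at most r parts such that μ + ρ̂ = w(λ + ρ̂) for some even signed permutation w. Suppose that λ is ⊆-minimal in its orbit, i.e., there is no partition ν with at most r parts such that ν ⊊ λ and ν + ρ̂ = w'(λ + ρ̂) for some even signed permutation w', and suppose that μ is ⊆-minimal in its orbit in the same sense. Then λ = μ. (In other words, every class of partitions conjugate under the star action of W(D_r) contains a unique ⊆-minimal element.) -/

import Mathlib

/-- `y` is obtained from `x ∈ ℚ^r` by an even signed permutation (an element of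
the Weyl group `W(D_r)`: a signed permutation with `∏ i, ε i = 1`). -/
def IsEvenSignedPermOfQ {r : ℕ} (x y : Fin r → ℚ) : Prop :=
  ∃ (σ : Equiv.Perm (Fin r)) (ε : Fin r → ℚ),
    (∀ i, ε i = 1 ∨ ε i = -1) ∧ (∏ i, ε i) = 1 ∧ ∀ i, y i = ε i * x (σ i)

/-- `x` and `y` are conjugate under the star action of `W(D_r)` with respect to
`ρ̂ = (−δ/2, −δ/2−1, …, −δ/2−(r−1))`: `y + ρ̂ = w(x + ρ̂)` for some even signed
permutation `w`. -/
def StarConjD {r : ℕ} (δ : ℤ) (x y : Fin r → ℤ) : Prop :=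
  IsEvenSignedPermOfQ
    (fun k => (x k : ℚ) + (-(δ : ℚ)/2 - ((k : ℕ) : ℚ)))
    (fun k => (y k : ℚ) + (-(δ : ℚ)/2 - ((k : ℕ) : ℚ)))

/-- `lam` is a partition with at most `r` parts: a weakly decreasing tuple of
nonnegative integers. -/
def IsPartitionTuple {r : ℕ} (lam : Fin r → ℤ) : Prop :=
  Antitone lam ∧ ∀ k, 0 ≤ lam k


open Finset

namespace Stmt17Aux

variable {r : ℕ}

/-- Two lower (downward-closed) subsets of `Fin r` are nested. -/
lemma lower_nested {S T : Finset (Fin r)}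
    (hS : ∀ ⦃i j : Fin r⦄, i ≤ j → j ∈ S → i ∈ S)
    (hT : ∀ ⦃i j : Fin r⦄, i ≤ j → j ∈ T → i ∈ T) :
    S ⊆ T ∨ T ⊆ S := by
  by_contra h
  push_neg at h
  obtain ⟨h1, h2⟩ := h
  obtain ⟨a, haS, haT⟩ := Finset.not_subset.1 h1
  obtain ⟨b, hbT, hbS⟩ := Finset.not_subset.1 h2
  rcases le_total a b with hab | hab
  · exact haT (hT hab hbT)
  · exact hbS (hS hab haS)

lemma card_inter_lower {S T : Finset (Fin r)}
    (hS : ∀ ⦃i j : Fin r⦄, i ≤ j → j ∈ S → i ∈ S)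
    (hT : ∀ ⦃i j : Fin r⦄, i ≤ j → j ∈ T → i ∈ T) :
    (S ∩ T).card = min S.card T.card := by
  rcases lower_nested hS hT with h | h
  · rw [Finset.inter_eq_left.2 h, min_eq_left (Finset.card_le_card h)]
  · rw [Finset.inter_eq_right.2 h, min_eq_right (Finset.card_le_card h)]

lemma card_union_upper {S T : Finset (Fin r)}
    (hS : ∀ ⦃i j : Fin r⦄, i ≤ j → i ∈ S → j ∈ S)
    (hT : ∀ ⦃i j : Fin r⦄, i ≤ j → i ∈ T → j ∈ T) :
    (S ∪ T).card = max S.card T.card := by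
  have hS' : ∀ ⦃i j : Fin r⦄, i ≤ j → j ∈ Sᶜ → i ∈ Sᶜ := by
    intro i j hij hj
    simp only [Finset.mem_compl] at hj ⊢
    exact fun hi => hj (hS hij hi)
  have hT' : ∀ ⦃i j : Fin r⦄, i ≤ j → j ∈ Tᶜ → i ∈ Tᶜ := by
    intro i j hij hj
    simp only [Finset.mem_compl] at hj ⊢
    exact fun hi => hj (hT hij hi)
  rcases lower_nested hS' hT' with h | h
  · have h2 : T ⊆ S := by
      intro a ha
      by_contra hc
      exact (Finset.mem_compl.1 (h (Finset.mem_compl.2 hc))) ha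
    rw [Finset.union_eq_left.2 h2, max_eq_left (Finset.card_le_card h2)]
  · have h2 : S ⊆ T := by
      intro a ha
      by_contra hc
      exact (Finset.mem_compl.1 (h (Finset.mem_compl.2 hc))) ha
    rw [Finset.union_eq_right.2 h2, max_eq_right (Finset.card_le_card h2)]

end Stmt17Aux

namespace Stmt17Aux

variable {r : ℕ}

lemma card_filter_of_map_eq {f g : Fin r → ℚ}
    (h : Multiset.map f Finset.univ.val = Multiset.map g Finset.univ.val)
    (p : ℚ → Prop) [DecidablePred p] :
    (univ.filter fun i => p (f i)).card = (univ.filter fun i => p (g i)).card := by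
  have h2 := congrArg (Multiset.countP p) h
  rw [Multiset.countP_map, Multiset.countP_map] at h2
  rw [Finset.card_filter, Finset.card_filter]
  simp [Multiset.countP_eq_card_filter, Finset.sum_boole] at h2 ⊢
  exact h2

lemma card_split_le (v : Fin r → ℚ) (a : ℚ) :
    (univ.filter fun i => a ≤ v i).card
      = (univ.filter fun i => a = v i).card + (univ.filter fun i => a < v i).card := by
  rw [← Finset.card_union_of_disjoint]
  · congr 1
    ext i
    simp [le_iff_eq_or_lt]
  · rw [Finset.disjoint_filter]
    intro i _ h1 h2
    exact absurd (h1 ▸ h2) (lt_irrefl _)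

lemma card_split_abs (v : Fin r → ℚ) {a : ℚ} (ha : 0 < a) :
    (univ.filter fun i => a ≤ |v i|).card
      = (univ.filter fun i => a ≤ v i).card + (univ.filter fun i => a ≤ -v i).card := by
  rw [← Finset.card_union_of_disjoint]
  · congr 1
    ext i
    simp [le_abs]
  · rw [Finset.disjoint_filter]
    intro i _ h1 h2
    nlinarith [h1, h2]

lemma card_split_abs_lt (v : Fin r → ℚ) {a : ℚ} (ha : 0 ≤ a) :
    (univ.filter fun i => a < |v i|).card
      = (univ.filter fun i => a < v i).card + (univ.filter fun i => a < -v i).card := by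
  rw [← Finset.card_union_of_disjoint]
  · congr 1
    ext i
    simp [lt_abs]
  · rw [Finset.disjoint_filter]
    intro i _ h1 h2
    nlinarith [h1, h2]

lemma card_split_abs_eq (v : Fin r → ℚ) {a : ℚ} (ha : 0 < a) :
    (univ.filter fun i => a = |v i|).card
      = (univ.filter fun i => a = v i).card + (univ.filter fun i => a = -v i).card := by
  rw [← Finset.card_union_of_disjoint]
  · congr 1
    ext i
    simp only [Finset.mem_filter, Finset.mem_union, Finset.mem_univ, true_and]
    constructor
    · intro h
      rcases abs_cases (v i) with ⟨h1, _⟩ | ⟨h1, _⟩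
      · exact Or.inl (h.trans h1)
      · exact Or.inr (by rw [h, h1])
    · rintro (h | h)
      · rw [abs_of_nonneg (by nlinarith)]
        exact h
      · rw [abs_of_nonpos (by nlinarith)]
        exact h
  · rw [Finset.disjoint_filter]
    intro i _ h1 h2
    nlinarith [h1, h2]

end Stmt17Aux

namespace Stmt17Aux

lemma filter_min_ge {r : ℕ} (x y : Fin r → ℚ) (a : ℚ) :
    (univ.filter fun i => a ≤ min (x i) (y i))
      = (univ.filter fun i => a ≤ x i) ∩ (univ.filter fun i => a ≤ y i) := by
  ext i; simp [le_min_iff]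

lemma filter_min_gt {r : ℕ} (x y : Fin r → ℚ) (a : ℚ) :
    (univ.filter fun i => a < min (x i) (y i))
      = (univ.filter fun i => a < x i) ∩ (univ.filter fun i => a < y i) := by
  ext i; simp [lt_min_iff]

lemma card_min_ge {r : ℕ} {x y : Fin r → ℚ} (hx : Antitone x) (hy : Antitone y) (a : ℚ) :
    (univ.filter fun i => a ≤ min (x i) (y i)).card
      = min (univ.filter fun i => a ≤ x i).card (univ.filter fun i => a ≤ y i).card := by
  rw [filter_min_ge]
  apply card_inter_lower
  · intro i j hij hj
    simp only [Finset.mem_filter, Finset.mem_univ, true_and] at hj ⊢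
    exact le_trans hj (hx hij)
  · intro i j hij hj
    simp only [Finset.mem_filter, Finset.mem_univ, true_and] at hj ⊢
    exact le_trans hj (hy hij)

lemma card_min_gt {r : ℕ} {x y : Fin r → ℚ} (hx : Antitone x) (hy : Antitone y) (a : ℚ) :
    (univ.filter fun i => a < min (x i) (y i)).card
      = min (univ.filter fun i => a < x i).card (univ.filter fun i => a < y i).card := by
  rw [filter_min_gt]
  apply card_inter_lower
  · intro i j hij hj
    simp only [Finset.mem_filter, Finset.mem_univ, true_and] at hj ⊢
    exact lt_of_lt_of_le hj (hx hij)
  · intro i j hij hj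
    simp only [Finset.mem_filter, Finset.mem_univ, true_and] at hj ⊢
    exact lt_of_lt_of_le hj (hy hij)

lemma card_neg_min_ge {r : ℕ} {x y : Fin r → ℚ} (hx : Antitone x) (hy : Antitone y) (a : ℚ) :
    (univ.filter fun i => a ≤ -min (x i) (y i)).card
      = max (univ.filter fun i => a ≤ -x i).card (univ.filter fun i => a ≤ -y i).card := by
  have : (univ.filter fun i => a ≤ -min (x i) (y i))
      = (univ.filter fun i => a ≤ -x i) ∪ (univ.filter fun i => a ≤ -y i) := by
    ext i
    simp only [Finset.mem_filter, Finset.mem_union, Finset.mem_univ, true_and]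
    simp only [le_neg, min_le_iff]
  rw [this]
  apply card_union_upper
  · intro i j hij hi
    simp only [Finset.mem_filter, Finset.mem_univ, true_and] at hi ⊢
    exact le_trans hi (neg_le_neg (hx hij))
  · intro i j hij hi
    simp only [Finset.mem_filter, Finset.mem_univ, true_and] at hi ⊢
    exact le_trans hi (neg_le_neg (hy hij))

lemma card_neg_min_gt {r : ℕ} {x y : Fin r → ℚ} (hx : Antitone x) (hy : Antitone y) (a : ℚ) :
    (univ.filter fun i => a < -min (x i) (y i)).card
      = max (univ.filter fun i => a < -x i).card (univ.filter fun i => a < -y i).card := by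
  have : (univ.filter fun i => a < -min (x i) (y i))
      = (univ.filter fun i => a < -x i) ∪ (univ.filter fun i => a < -y i) := by
    ext i
    simp only [Finset.mem_filter, Finset.mem_union, Finset.mem_univ, true_and]
    simp only [lt_neg, min_lt_iff]
  rw [this]
  apply card_union_upper
  · intro i j hij hi
    simp only [Finset.mem_filter, Finset.mem_univ, true_and] at hi ⊢
    exact lt_of_lt_of_le hi (neg_le_neg (hx hij))
  · intro i j hij hi
    simp only [Finset.mem_filter, Finset.mem_univ, true_and] at hi ⊢
    exact lt_of_lt_of_le hi (neg_le_neg (hy hij))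

end Stmt17Aux

namespace Stmt17Aux

lemma card_split_le_neg {r : ℕ} (v : Fin r → ℚ) (a : ℚ) :
    (univ.filter fun i => a ≤ -v i).card
      = (univ.filter fun i => a = -v i).card + (univ.filter fun i => a < -v i).card :=
  card_split_le (fun i => -v i) a

lemma count_map_univ {r : ℕ} (f : Fin r → ℚ) (a : ℚ) :
    Multiset.count a (Multiset.map f Finset.univ.val)
      = (univ.filter fun i => a = f i).card := by
  rw [Multiset.count_map]
  rfl

lemma min_abs_multiset {r : ℕ} {x y : Fin r → ℚ} (hx : Antitone x) (hy : Antitone y)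
    (habs : Multiset.map (fun i => |x i|) Finset.univ.val
      = Multiset.map (fun i => |y i|) Finset.univ.val) :
    Multiset.map (fun i => |min (x i) (y i)|) Finset.univ.val
      = Multiset.map (fun i => |x i|) Finset.univ.val := by
  apply Multiset.ext.2
  intro a
  rw [count_map_univ, count_map_univ]
  rcases lt_trichotomy a 0 with ha | ha | ha
  · rw [Finset.filter_eq_empty_iff.2, Finset.filter_eq_empty_iff.2]
    · intro i _
      intro h
      exact absurd (h ▸ abs_nonneg (x i)) (not_le.2 ha)
    · intro i _
      intro h
      exact absurd (h ▸ abs_nonneg (min (x i) (y i))) (not_le.2 ha)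
  · subst ha
    have conv1 : ∀ v : Fin r → ℚ, (univ.filter fun i => (0:ℚ) = |v i|)
        = (univ.filter fun i => (0:ℚ) = v i) := by
      intro v
      apply Finset.filter_congr
      intro i _
      constructor
      · intro h; exact (abs_eq_zero.1 h.symm).symm
      · intro h; rw [← h]; simp
    rw [conv1, conv1]
    have hE : (univ.filter fun i => (0:ℚ) = |x i|).card
        = (univ.filter fun i => (0:ℚ) = |y i|).card :=
      card_filter_of_map_eq habs (fun t => (0:ℚ) = t)
    rw [conv1, conv1] at hE
    have sx := card_split_le x 0
    have sy := card_split_le y 0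
    have sw := card_split_le (fun i => min (x i) (y i)) 0
    have mw := card_min_ge hx hy 0
    have mw' := card_min_gt hx hy 0
    omega
  · -- a > 0
    have H1 : (univ.filter fun i => a ≤ |x i|).card = (univ.filter fun i => a ≤ |y i|).card :=
      card_filter_of_map_eq habs (fun t => a ≤ t)
    have H2 : (univ.filter fun i => a < |x i|).card = (univ.filter fun i => a < |y i|).card :=
      card_filter_of_map_eq habs (fun t => a < t)
    rw [card_split_abs x ha, card_split_abs y ha] at H1
    rw [card_split_abs_lt x ha.le, card_split_abs_lt y ha.le] at H2
    rw [card_split_abs_eq x ha, card_split_abs_eq _ ha]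
    have sx := card_split_le x a
    have sy := card_split_le y a
    have sw := card_split_le (fun i => min (x i) (y i)) a
    have sx' := card_split_le_neg x a
    have sy' := card_split_le_neg y a
    have sw' := card_split_le_neg (fun i => min (x i) (y i)) a
    have mw := card_min_ge hx hy a
    have mw' := card_min_gt hx hy a
    have nw := card_neg_min_ge hx hy a
    have nw' := card_neg_min_gt hx hy a
    omega

end Stmt17Aux

namespace Stmt17Aux

lemma prod_sign_decomp {r : ℕ} (v : Fin r → ℚ) :
    ∏ i, v i = (-1) ^ ((univ.filter fun i => 0 < -v i).card) * ∏ i, |v i| := by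
  have h1 : ∀ i : Fin r, v i = (if 0 < -v i then (-1 : ℚ) else 1) * |v i| := by
    intro i
    by_cases h : 0 < -v i
    · rw [if_pos h, abs_of_neg (by linarith)]
      ring
    · rw [if_neg h, abs_of_nonneg (by simp at h; linarith), one_mul]
  calc ∏ i, v i = ∏ i, ((if 0 < -v i then (-1 : ℚ) else 1) * |v i|) := by
        exact Finset.prod_congr rfl (fun i _ => h1 i)
    _ = (∏ i, (if 0 < -v i then (-1 : ℚ) else 1)) * ∏ i, |v i| := Finset.prod_mul_distrib
    _ = (-1) ^ ((univ.filter fun i => 0 < -v i).card) * ∏ i, |v i| := by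
        rw [Finset.prod_ite (fun _ => (-1:ℚ)) (fun _ => (1:ℚ))]
        simp [Finset.prod_const]

lemma prod_abs_of_map_eq {r : ℕ} {f g : Fin r → ℚ}
    (h : Multiset.map (fun i => |f i|) Finset.univ.val
      = Multiset.map (fun i => |g i|) Finset.univ.val) :
    ∏ i, |f i| = ∏ i, |g i| := by
  have h2 := congrArg Multiset.prod h
  rwa [← Finset.prod_eq_multiset_prod, ← Finset.prod_eq_multiset_prod] at h2

lemma min_prod {r : ℕ} {x y : Fin r → ℚ} (hx : Antitone x) (hy : Antitone y)
    (habs : Multiset.map (fun i => |x i|) Finset.univ.val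
      = Multiset.map (fun i => |y i|) Finset.univ.val)
    (hprod : ∏ i, x i = ∏ i, y i) :
    ∏ i, min (x i) (y i) = ∏ i, x i := by
  have habsw := min_abs_multiset hx hy habs
  by_cases hz : ∃ j, x j = 0
  · obtain ⟨j, hj⟩ := hz
    have h0 : (0 : ℚ) ∈ Multiset.map (fun i => |x i|) Finset.univ.val := by
      rw [Multiset.mem_map]
      exact ⟨j, Finset.mem_univ_val _, by rw [hj]; simp⟩
    rw [← habsw, Multiset.mem_map] at h0
    obtain ⟨i, _, hi⟩ := h0
    rw [Finset.prod_eq_zero (Finset.mem_univ j) hj,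
      Finset.prod_eq_zero (Finset.mem_univ i) (abs_eq_zero.1 hi : min (x i) (y i) = 0)]
  · push_neg at hz
    have hPx : ∏ i, |x i| ≠ 0 := by
      apply Finset.prod_ne_zero_iff.2
      intro i _
      simpa using hz i
    have hPxy : ∏ i, |x i| = ∏ i, |y i| := prod_abs_of_map_eq habs
    have hPwx : ∏ i, |min (x i) (y i)| = ∏ i, |x i| := prod_abs_of_map_eq habsw
    set nx := (univ.filter fun i => 0 < -x i).card with hnx
    set ny := (univ.filter fun i => 0 < -y i).card with hny
    have hsx := prod_sign_decomp x
    have hsy := prod_sign_decomp y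
    have hsw := prod_sign_decomp (fun i => min (x i) (y i))
    have hmax : (univ.filter fun i => 0 < -min (x i) (y i)).card = max nx ny :=
      card_neg_min_gt hx hy 0
    have hsign : ((-1 : ℚ)) ^ nx = (-1) ^ ny := by
      have := hprod
      rw [hsx, hsy, ← hPxy] at this
      exact mul_right_cancel₀ hPx this
    have hsignmax : ((-1 : ℚ)) ^ (max nx ny) = (-1) ^ nx := by
      rcases max_choice nx ny with h | h
      · rw [h]
      · rw [h, hsign]
    rw [hsw, hsx, hmax, hsignmax, hPwx]

end Stmt17Aux

namespace Stmt17Aux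

lemma es_elim {r : ℕ} {x y : Fin r → ℚ} (h : IsEvenSignedPermOfQ x y) :
    Multiset.map (fun i => |x i|) Finset.univ.val
      = Multiset.map (fun i => |y i|) Finset.univ.val ∧ ∏ i, x i = ∏ i, y i := by
  obtain ⟨σ, ε, hε, hprod, hy⟩ := h
  constructor
  · have h1 : (Multiset.map (fun i => |y i|) Finset.univ.val)
        = Multiset.map (fun i => |x (σ i)|) Finset.univ.val := by
      apply Multiset.map_congr rfl
      intro i _
      rw [hy i, abs_mul]
      rcases hε i with h | h <;> rw [h] <;> simp
    rw [h1, show (Multiset.map (fun i => |x (σ i)|) Finset.univ.val)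
        = Multiset.map (fun i => |x i|) (Multiset.map σ Finset.univ.val) by
      rw [Multiset.map_map]; rfl, Multiset.map_univ_val_equiv]
  · have h1 : ∏ i, y i = (∏ i, ε i) * ∏ i, x (σ i) := by
      rw [← Finset.prod_mul_distrib]
      exact Finset.prod_congr rfl (fun i _ => hy i)
    rw [h1, hprod, one_mul, Equiv.prod_comp σ x]

lemma exists_comp_eq {r : ℕ} {f g : Fin r → ℚ}
    (h : Multiset.map f Finset.univ.val = Multiset.map g Finset.univ.val) :
    ∃ σ : Equiv.Perm (Fin r), ∀ i, g i = f (σ i) := by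
  have hperm : (List.ofFn f).Perm (List.ofFn g) := by
    rw [← Multiset.coe_eq_coe]
    have e1 : ((List.ofFn f : List ℚ) : Multiset ℚ) = Multiset.map f Finset.univ.val := by
      rw [List.ofFn_eq_map]
      rfl
    have e2 : ((List.ofFn g : List ℚ) : Multiset ℚ) = Multiset.map g Finset.univ.val := by
      rw [List.ofFn_eq_map]
      rfl
    rw [e1, e2, h]
  have h1 : Monotone (f ∘ Tuple.sort f) := Tuple.monotone_sort f
  have h2 : Monotone (g ∘ Tuple.sort g) := Tuple.monotone_sort g
  have hp : (List.ofFn (f ∘ Tuple.sort f)).Perm (List.ofFn (g ∘ Tuple.sort g)) :=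
    ((Equiv.Perm.ofFn_comp_perm (Tuple.sort f) f).trans hperm).trans
      (Equiv.Perm.ofFn_comp_perm (Tuple.sort g) g).symm
  have heq : f ∘ Tuple.sort f = g ∘ Tuple.sort g :=
    List.ofFn_injective (List.Perm.eq_of_sortedLE (List.sortedLE_ofFn_iff.2 h1) (List.sortedLE_ofFn_iff.2 h2) hp)
  refine ⟨(Tuple.sort g).symm.trans (Tuple.sort f), fun i => ?_⟩
  have := congrFun heq ((Tuple.sort g).symm i)
  simp only [Function.comp_apply, Equiv.apply_symm_apply] at this
  exact this.symm

end Stmt17Aux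

namespace Stmt17Aux

lemma prod_pm_one {r : ℕ} {ε : Fin r → ℚ} (hε : ∀ i, ε i = 1 ∨ ε i = -1) :
    (∏ i, ε i) = 1 ∨ (∏ i, ε i) = -1 := by
  induction (Finset.univ : Finset (Fin r)) using Finset.induction with
  | empty => simp
  | @insert a s ha ih =>
    rw [Finset.prod_insert ha]
    rcases hε a with h1 | h1 <;> rcases ih with h2 | h2 <;> rw [h1, h2] <;> norm_num

lemma es_intro {r : ℕ} {x y : Fin r → ℚ}
    (habs : Multiset.map (fun i => |x i|) Finset.univ.val
      = Multiset.map (fun i => |y i|) Finset.univ.val)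
    (hprod : ∏ i, x i = ∏ i, y i) :
    IsEvenSignedPermOfQ x y := by
  obtain ⟨σ, hσ⟩ := exists_comp_eq habs
  -- hσ : ∀ i, |y i| = |x (σ i)|
  by_cases hz : ∀ i, x i ≠ 0
  · refine ⟨σ, fun i => y i / x (σ i), fun i => ?_, ?_, fun i => ?_⟩
    · have hx0 : x (σ i) ≠ 0 := hz (σ i)
      have habs' : |y i| = |x (σ i)| := hσ i
      rcases abs_eq_abs.1 habs' with h | h
      · left; show y i / x (σ i) = 1; rw [h]; field_simp
      · right; show y i / x (σ i) = -1; rw [h]; field_simp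
    · show (∏ i, y i / x (σ i)) = 1
      rw [Finset.prod_div_distrib]
      rw [Equiv.prod_comp σ x, ← hprod]
      apply div_self
      rw [← Equiv.prod_comp σ x]
      apply Finset.prod_ne_zero_iff.2
      intro i _
      exact hz (σ i)
    · have hx0 : x (σ i) ≠ 0 := hz (σ i)
      show y i = y i / x (σ i) * x (σ i)
      field_simp
  · push_neg at hz
    obtain ⟨j, hj⟩ := hz
    set ε' : Fin r → ℚ := fun i => if x (σ i) = 0 then 1 else y i / x (σ i) with hε'
    have hε'pm : ∀ i, ε' i = 1 ∨ ε' i = -1 := by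
      intro i
      rw [hε']
      by_cases h : x (σ i) = 0
      · left; simp [h]
      · simp only [if_neg h]
        rcases abs_eq_abs.1 (hσ i) with h2 | h2
        · left; rw [h2]; field_simp
        · right; rw [h2]; field_simp
    have hy' : ∀ i, y i = ε' i * x (σ i) := by
      intro i
      by_cases h : x (σ i) = 0
      · rw [h, mul_zero]
        have := hσ i
        rw [h, abs_zero, abs_eq_zero] at this
        exact this
      · show y i = (if x (σ i) = 0 then 1 else y i / x (σ i)) * x (σ i)
        rw [if_neg h]
        field_simp
    set P := ∏ i, ε' i with hP
    have hPpm : P = 1 ∨ P = -1 := prod_pm_one hε'pm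
    set i₀ := σ.symm j with hi₀
    refine ⟨σ, Function.update ε' i₀ (P * ε' i₀), fun i => ?_, ?_, fun i => ?_⟩
    · by_cases h : i = i₀
      · rw [h, Function.update_self]
        rcases hPpm with h1 | h1 <;> rcases hε'pm i₀ with h2 | h2 <;>
          rw [h1, h2] <;> norm_num
      · rw [Function.update_of_ne h]
        exact hε'pm i
    · rw [Finset.prod_update_of_mem (Finset.mem_univ i₀)]
      have : ∏ i ∈ Finset.univ \ {i₀}, ε' i = P / ε' i₀ := by
        rw [← Finset.erase_eq, hP, ← Finset.prod_erase_mul Finset.univ ε' (Finset.mem_univ i₀)]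
        have hne : ε' i₀ ≠ 0 := by rcases hε'pm i₀ with h | h <;> rw [h] <;> norm_num
        field_simp
      rw [this]
      have hne : ε' i₀ ≠ 0 := by rcases hε'pm i₀ with h | h <;> rw [h] <;> norm_num
      have : P * ε' i₀ * (P / ε' i₀) = P * P := by field_simp
      rw [this]
      rcases hPpm with h | h <;> rw [h] <;> norm_num
    · by_cases h : i = i₀
      · rw [h, Function.update_self]
        have hxσ : x (σ i₀) = 0 := by rw [hi₀]; simp [hj]
        have hy0 : y i₀ = 0 := by
          have := hσ i₀
          rw [hxσ, abs_zero, abs_eq_zero] at this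
          exact this
        rw [hxσ, mul_zero]
        exact hy0
      · rw [Function.update_of_ne h]
        exact hy' i

end Stmt17Aux

/-- every class of partitions conjugate under the star action of
`W(D_r)` contains a unique `⊆`-minimal element: if `λ` and `μ` are star
conjugate partitions and each is `⊆`-minimal in its orbit (no partition `ν ⊊ λ`
resp. `ν ⊊ μ` is star conjugate to it), then `λ = μ`. -/
theorem stmt17 (r : ℕ) (hr : 1 ≤ r) (δ : ℤ)
    (lam mu : Fin r → ℤ)
    (hlam : IsPartitionTuple lam) (hmu : IsPartitionTuple mu)
    (hconj : StarConjD δ lam mu)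
    (hlmin : ¬ ∃ nu : Fin r → ℤ, IsPartitionTuple nu ∧
      (∀ k, nu k ≤ lam k) ∧ nu ≠ lam ∧ StarConjD δ lam nu)
    (hmmin : ¬ ∃ nu : Fin r → ℤ, IsPartitionTuple nu ∧
      (∀ k, nu k ≤ mu k) ∧ nu ≠ mu ∧ StarConjD δ mu nu) :
    lam = mu := by

  classical
  set X : Fin r → ℚ := fun k => (lam k : ℚ) + (-(δ : ℚ)/2 - ((k : ℕ) : ℚ)) with hX
  set Y : Fin r → ℚ := fun k => (mu k : ℚ) + (-(δ : ℚ)/2 - ((k : ℕ) : ℚ)) with hY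
  set nu : Fin r → ℤ := fun k => min (lam k) (mu k) with hnu
  have hXanti : Antitone X := by
    intro a b hab
    have h1 : (lam b : ℚ) ≤ (lam a : ℚ) := Int.cast_le.2 (hlam.1 hab)
    have h2 : ((a : ℕ) : ℚ) ≤ ((b : ℕ) : ℚ) := Nat.cast_le.2 (Fin.le_def.1 hab)
    simp only [hX]
    linarith
  have hYanti : Antitone Y := by
    intro a b hab
    have h1 : (mu b : ℚ) ≤ (mu a : ℚ) := Int.cast_le.2 (hmu.1 hab)
    have h2 : ((a : ℕ) : ℚ) ≤ ((b : ℕ) : ℚ) := Nat.cast_le.2 (Fin.le_def.1 hab)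
    simp only [hY]
    linarith
  have hes : IsEvenSignedPermOfQ X Y := hconj
  obtain ⟨habsXY, hprodXY⟩ := Stmt17Aux.es_elim hes
  have hW : (fun k => (nu k : ℚ) + (-(δ : ℚ)/2 - ((k : ℕ) : ℚ)))
      = fun k => min (X k) (Y k) := by
    funext k
    simp only [hnu, hX, hY]
    push_cast
    rw [min_add_add_right]
  have habsW := Stmt17Aux.min_abs_multiset hXanti hYanti habsXY
  have hprodW := Stmt17Aux.min_prod hXanti hYanti habsXY hprodXY
  have hSCl : StarConjD δ lam nu := by
    show IsEvenSignedPermOfQ X (fun k => (nu k : ℚ) + (-(δ : ℚ)/2 - ((k : ℕ) : ℚ)))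
    rw [hW]
    exact Stmt17Aux.es_intro habsW.symm hprodW.symm
  have hSCm : StarConjD δ mu nu := by
    show IsEvenSignedPermOfQ Y (fun k => (nu k : ℚ) + (-(δ : ℚ)/2 - ((k : ℕ) : ℚ)))
    rw [hW]
    exact Stmt17Aux.es_intro (habsW.trans habsXY).symm (hprodW.trans hprodXY).symm
  have hpart : IsPartitionTuple nu := by
    constructor
    · intro a b hab
      exact min_le_min (hlam.1 hab) (hmu.1 hab)
    · intro k
      exact le_min (hlam.2 k) (hmu.2 k)
  have h1 : nu = lam := by
    by_contra hne
    exact hlmin ⟨nu, hpart, fun k => min_le_left _ _, hne, hSCl⟩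
  have h2 : nu = mu := by
    by_contra hne
    exact hmmin ⟨nu, hpart, fun k => min_le_right _ _, hne, hSCm⟩
  exact h1.symm.trans h2
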